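/- Let N ≥ 1, let Σ, Q, Ω ∈ ℂ^{N×N} be Hermitian positive definite matrices, and let C ∈ ℝ. If log(det Σ) + Re(Tr(Σ⁻¹ Ω)) − log(det Q) ≤ C + N, then log(det Ω) − log(det Q) ≤ C. -/

import Mathlib

open Matrix
open scoped ComplexOrder

lemma my_trace_eq {n : Type*} [Fintype n] [DecidableEq n] {A : Matrix n n ℂ}
    (hA : A.IsHermitian) : A.trace = ∑ i, (hA.eigenvalues i : ℂ) := by
  exact hA.trace_eq_sum_eigenvalues

lemma my_conj_posdef {n : Type*} [Fintype n] [DecidableEq n] {A B : Matrix n n ℂ}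
    (hA : A.PosDef) (hB : IsUnit B.det) : (B * A * Bᴴ).PosDef := by
  refine Matrix.PosDef.of_dotProduct_mulVec_pos ?_ (fun x hx => ?_)
  · unfold Matrix.IsHermitian
    simp [Matrix.conjTranspose_mul, hA.1.eq, Matrix.mul_assoc]
  · have hy : Bᴴ *ᵥ x ≠ 0 := by
      intro h0
      apply hx
      have : IsUnit Bᴴ.det := by simpa using hB
      have hinj := Matrix.mulVec_injective_iff_isUnit.mpr
        ((Matrix.isUnit_iff_isUnit_det Bᴴ).mpr this)
      have := hinj.eq_iff (a := x) (b := 0)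
      simp only [Matrix.mulVec_zero] at this
      exact this.mp h0
    have key : star x ⬝ᵥ ((B * A * Bᴴ) *ᵥ x) = star (Bᴴ *ᵥ x) ⬝ᵥ (A *ᵥ (Bᴴ *ᵥ x)) := by
      rw [star_mulVec, Matrix.conjTranspose_conjTranspose]
      rw [← Matrix.mulVec_mulVec, ← Matrix.mulVec_mulVec]
      rw [Matrix.dotProduct_mulVec (star x) B, Matrix.dotProduct_mulVec]
    rw [key]
    exact hA.dotProduct_mulVec_pos hy

lemma my_logdet_le {n : Type*} [Fintype n] [DecidableEq n] {M : Matrix n n ℂ}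
    (hM : M.PosDef) : Real.log M.det.re ≤ (M.trace).re - Fintype.card n := by
  have hdet : M.det = ((∏ i, hM.1.eigenvalues i : ℝ) : ℂ) := by
    rw [hM.1.det_eq_prod_eigenvalues]; push_cast; rfl
  have htr : M.trace = ((∑ i, hM.1.eigenvalues i : ℝ) : ℂ) := by
    rw [my_trace_eq hM.1]; push_cast; rfl
  rw [hdet, htr, Complex.ofReal_re, Complex.ofReal_re]
  rw [Real.log_prod (fun i _ => (hM.eigenvalues_pos i).ne')]
  calc ∑ i, Real.log (hM.1.eigenvalues i) ≤ ∑ i, (hM.1.eigenvalues i - 1) :=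
        Finset.sum_le_sum fun i _ => Real.log_le_sub_one_of_pos (hM.eigenvalues_pos i)
    _ = (∑ i, hM.1.eigenvalues i) - Fintype.card n := by
        rw [Finset.sum_sub_distrib]; simp [Finset.card_univ]

open scoped MatrixOrder in
/-- Feasibility implication: a point satisfying the linearized fronthaul capacity
constraint also satisfies the original log-determinant capacity constraint. -/
theorem stmt_7
    (N : ℕ) (hN : 1 ≤ N)
    (Sg Q Om : Matrix (Fin N) (Fin N) ℂ)
    (hSg : Sg.PosDef) (hQ : Q.PosDef) (hOm : Om.PosDef)
    (C : ℝ)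
    (h : Real.log Sg.det.re + ((Sg⁻¹ * Om).trace).re - Real.log Q.det.re ≤ C + N) :
    Real.log Om.det.re - Real.log Q.det.re ≤ C := by
  set S := CFC.sqrt Sg with hSdef
  have hS : S.PosSemidef := (CFC.sqrt_nonneg Sg).posSemidef
  have hSS : S * S = Sg := CFC.sqrt_mul_sqrt_self Sg hSg.posSemidef.nonneg
  have hSgdet_pos : (0 : ℂ) < Sg.det := hSg.det_pos
  have hSgdet_im : Sg.det.im = 0 := by
    have := (Complex.lt_def.mp hSgdet_pos).2; simpa using this.symm
  have hSgdet_re : 0 < Sg.det.re := by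
    have := (Complex.lt_def.mp hSgdet_pos).1; simpa using this
  have hSgdet_ne : Sg.det ≠ 0 := hSgdet_pos.ne'
  have hSdet_ne : S.det ≠ 0 := by
    intro h0
    apply hSgdet_ne
    rw [← hSS, Matrix.det_mul, h0, mul_zero]
  have hSinv_det : IsUnit (S⁻¹).det := by
    rw [Matrix.det_nonsing_inv]
    exact isUnit_iff_ne_zero.mpr (by simp [hSdet_ne])
  have hSinvH : (S⁻¹).IsHermitian := hS.1.inv
  set M := S⁻¹ * Om * S⁻¹ with hMdef
  have hM : M.PosDef := by
    have := my_conj_posdef hOm hSinv_det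
    rwa [hSinvH.eq] at this
  -- determinant relation
  have hdet : Om.det = Sg.det * M.det := by
    rw [hMdef, Matrix.det_mul, Matrix.det_mul, Matrix.det_nonsing_inv, ← hSS, Matrix.det_mul]
    rw [Ring.inverse_eq_inv']
    field_simp
  -- trace relation
  have htr : (Sg⁻¹ * Om).trace = M.trace := by
    rw [← hSS, Matrix.mul_inv_rev, hMdef, Matrix.trace_mul_cycle, Matrix.trace_mul_cycle]
  -- real parts
  have hMdet_pos : (0 : ℂ) < M.det := hM.det_pos
  have hMdet_re : 0 < M.det.re := by
    have := (Complex.lt_def.mp hMdet_pos).1; simpa using this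
  have hOmdet_re : Om.det.re = Sg.det.re * M.det.re := by
    rw [hdet, Complex.mul_re, hSgdet_im, zero_mul, sub_zero]
  have hkey : Real.log M.det.re ≤ (M.trace).re - N := by
    have := my_logdet_le hM
    simpa using this
  have hlog : Real.log Om.det.re = Real.log Sg.det.re + Real.log M.det.re := by
    rw [hOmdet_re, Real.log_mul hSgdet_re.ne' hMdet_re.ne']
  have htr_re : ((Sg⁻¹ * Om).trace).re = (M.trace).re := by rw [htr]
  rw [htr_re] at h
  linarith
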